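/- Suppose p_{ij} ≥ 1 - √((1-p_{ii})(1-p_{jj})) for all 1 ≤ i < j ≤ k. Then A ⊆ B, where B := { c ∈ R_{≥0}^k : Σ_{i∈[k]} c_i/c(p_{ii}) ≤ 1 }. -/

import Mathlib

open Finset

theorem stmt_6 (k : ℕ) (hk : 1 ≤ k) (p : Fin k → Fin k → ℝ)
    (hsym : ∀ i j, p i j = p j i) (hp : ∀ i j, p i j ∈ Set.Ioo (0 : ℝ) 1)
    (hthr : ∀ i j : Fin k, i < j →
      1 - Real.sqrt ((1 - p i i) * (1 - p j j)) ≤ p i j) :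
    {c : Fin k → ℝ | (∀ i, 0 ≤ c i) ∧ ∀ I : Finset (Fin k), I.Nonempty →
        0 ≤ (∑ i ∈ I, c i) +
          (1 / 2) * ∑ i ∈ I, ∑ j ∈ I, c i * c j * Real.log (1 - p i j)} ⊆
      {c : Fin k → ℝ | (∀ i, 0 ≤ c i) ∧
        ∑ i, c i / (-2 / Real.log (1 - p i i)) ≤ 1} := by
  intro c hc
  obtain ⟨hc0, hA⟩ := hc
  set a : Fin k → ℝ := fun i => -Real.log (1 - p i i) / 2 with ha
  have hpos : ∀ i j, 0 < 1 - p i j := fun i j => by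
    have := (hp i j).2; linarith
  have hlt1 : ∀ i j, 1 - p i j < 1 := fun i j => by
    have := (hp i j).1; linarith
  have hlogneg : ∀ i, Real.log (1 - p i i) < 0 := fun i =>
    Real.log_neg (hpos i i) (hlt1 i i)
  -- key inequality: log(1-p i j) ≤ -(a i + a j)
  have key : ∀ i j, Real.log (1 - p i j) ≤ -(a i + a j) := by
    have main : ∀ i j : Fin k, i < j → Real.log (1 - p i j) ≤ -(a i + a j) := by
      intro i j hij
      have h1 : 1 - p i j ≤ Real.sqrt ((1 - p i i) * (1 - p j j)) := by
        have := hthr i j hij; linarith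
      have h2 : Real.log (1 - p i j) ≤
          Real.log (Real.sqrt ((1 - p i i) * (1 - p j j))) :=
        Real.log_le_log (hpos i j) h1
      rw [Real.log_sqrt (mul_nonneg (hpos i i).le (hpos j j).le),
        Real.log_mul (by have := hpos i i; linarith) (by have := hpos j j; linarith)] at h2
      simp only [ha]
      linarith
    intro i j
    rcases lt_trichotomy i j with h | h | h
    · exact main i j h
    · subst h; simp only [ha]; ring_nf; simp
    · rw [hsym]; have := main j i h; linarith [this]
  have huniv : (univ : Finset (Fin k)).Nonempty := ⟨⟨0, hk⟩, mem_univ _⟩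
  have h0 := hA univ huniv
  set S := ∑ i, c i with hS
  set T := ∑ i, c i * a i with hT
  have hstep : ∑ i, ∑ j, c i * c j * Real.log (1 - p i j) ≤ -(2 * (S * T)) := by
    have : ∀ i j : Fin k, c i * c j * Real.log (1 - p i j) ≤
        c i * c j * (-(a i + a j)) := fun i j =>
      mul_le_mul_of_nonneg_left (key i j) (mul_nonneg (hc0 i) (hc0 j))
    calc ∑ i, ∑ j, c i * c j * Real.log (1 - p i j)
        ≤ ∑ i, ∑ j, c i * c j * (-(a i + a j)) :=
          Finset.sum_le_sum fun i _ => Finset.sum_le_sum fun j _ => this i j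
      _ = -(2 * (S * T)) := by
          have inner : ∀ i : Fin k, ∑ j, c i * c j * -(a i + a j)
              = -(c i * a i * S) - c i * T := by
            intro i
            simp only [hS, hT, Finset.mul_sum, ← Finset.sum_neg_distrib,
              ← Finset.sum_sub_distrib]
            exact Finset.sum_congr rfl fun j _ => by ring
          rw [Finset.sum_congr rfl fun i _ => inner i]
          simp only [Finset.sum_sub_distrib, Finset.sum_neg_distrib, ← Finset.sum_mul,
            ← hT, ← hS]
          ring
  have hST : 0 ≤ S * (1 - T) := by nlinarith [h0, hstep]
  have hTle : T ≤ 1 := by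
    rcases eq_or_lt_of_le (Finset.sum_nonneg fun i _ => hc0 i : (0:ℝ) ≤ S) with h | h
    · have hall : ∀ i ∈ (univ : Finset (Fin k)), c i = 0 := by
        intro i hi
        exact (Finset.sum_eq_zero_iff_of_nonneg fun i _ => hc0 i).mp h.symm i hi
      have : T = 0 := Finset.sum_eq_zero fun i hi => by rw [hall i hi, zero_mul]
      rw [this]; norm_num
    · nlinarith
  have : ∑ i, c i / (-2 / Real.log (1 - p i i)) = T := by
    refine Finset.sum_congr rfl fun i _ => ?_
    have hL : Real.log (1 - p i i) ≠ 0 := ne_of_lt (hlogneg i)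
    field_simp [ha]
    simp only [ha]; ring
  exact ⟨hc0, by rw [this]; exact hTle⟩
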